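/- arXiv:1411.2620 — 2 statements merged into one kernel-verified Lean document; each statement's English description precedes it below -/
import Mathlib

section
/- Let γ > 0, p > 1 and ω > γ²/4. Then φ_ω(0)² = ( ((p+1)ω/2) · (1 - ξ(ω,γ)²) )^{2/(p-1)}, and ‖φ_ω‖_{L^{p+1}}^{p+1} = (4/((p-1)√ω)) · ((p+1)ω/2)^{(p+1)/(p-1)} · ∫_{ξ(ω,γ)}^1 (1 - s²)^{2/(p-1)} ds. -/
open MeasureTheory Set
open scoped ENNReal

noncomputable section

/-- Inverse hyperbolic tangent. -/
def artanh (x : ℝ) : ℝ := Real.log ((1 + x) / (1 - x)) / 2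

/-- Squared `L²` norm of `v`. -/
def l2Sq (v : ℝ → ℂ) : ℝ := ∫ x : ℝ, ‖v x‖ ^ 2

/-- Squared `L²` norm of the derivative of `v`. -/
def gradSq (v : ℝ → ℂ) : ℝ := ∫ x : ℝ, ‖deriv v x‖ ^ 2

/-- `∫ |v|^(p+1)`, i.e. `‖v‖_{L^{p+1}}^{p+1}`. -/
def lpPow (p : ℝ) (v : ℝ → ℂ) : ℝ := ∫ x : ℝ, ‖v x‖ ^ (p + 1)

/-- `v ∈ H¹(ℝ)`, expressed via its continuous representative: `v` is square
integrable, absolutely continuous with a.e. derivative `deriv v`, which is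
square integrable. -/
def MemH1 (v : ℝ → ℂ) : Prop :=
  Continuous v ∧ MemLp v 2 volume ∧ MemLp (deriv v) 2 volume ∧
    ∀ x : ℝ, v x = v 0 + ∫ t in (0:ℝ)..x, deriv v t

/-- The energy functional `E`. -/
def En (γ p : ℝ) (v : ℝ → ℂ) : ℝ :=
  gradSq v / 2 - γ / 2 * ‖v 0‖ ^ 2 - lpPow p v / (p + 1)

/-- The Nehari functional `K_ω`. -/
def Kfun (γ p ω : ℝ) (v : ℝ → ℂ) : ℝ :=
  gradSq v + ω * l2Sq v - γ * ‖v 0‖ ^ 2 - lpPow p v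

/-- The virial functional `P`. -/
def Pfun (γ p : ℝ) (v : ℝ → ℂ) : ℝ :=
  gradSq v - γ / 2 * ‖v 0‖ ^ 2 - (p - 1) / (2 * (p + 1)) * lpPow p v

/-- The action functional `S_ω`. -/
def Sfun (γ p ω : ℝ) (v : ℝ → ℂ) : ℝ := En γ p v + ω / 2 * l2Sq v

/-- The minimal action `d(ω)` on the Nehari manifold. -/
def dInf (γ p ω : ℝ) : ℝ :=
  sInf {s : ℝ | ∃ v : ℝ → ℂ, MemH1 v ∧ v ≠ 0 ∧ Kfun γ p ω v = 0 ∧ s = Sfun γ p ω v}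

/-- The explicit standing wave profile `φ_ω`. -/
def phi (γ p ω : ℝ) (x : ℝ) : ℝ :=
  ((p + 1) * ω / 2 *
      (1 / Real.cosh ((p - 1) * Real.sqrt ω / 2 * |x| + artanh (γ / (2 * Real.sqrt ω)))) ^ 2)
    ^ (1 / (p - 1))

/-- `φ_ω` as a complex valued function. -/
def phiC (γ p ω : ℝ) : ℝ → ℂ := fun x => (phi γ p ω x : ℂ)

/-- The `L²`-invariant scaling `v^λ(x) = λ^{1/2} v(λ x)`. -/
def scale (l : ℝ) (v : ℝ → ℂ) : ℝ → ℂ := fun x => (Real.sqrt l : ℂ) * v (l * x)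

/-- The set `𝓑_ω`. -/
def inB (γ p ω : ℝ) (v : ℝ → ℂ) : Prop :=
  MemH1 v ∧ 0 < En γ p v ∧ En γ p v < En γ p (phiC γ p ω) ∧
    l2Sq v = l2Sq (phiC γ p ω) ∧ Pfun γ p v < 0 ∧ Kfun γ p ω v < 0


lemma tanh_eq_exp (x : ℝ) : Real.tanh x = 1 - 2 / (Real.exp (2 * x) + 1) := by
  have h1 : (0:ℝ) < Real.exp x := Real.exp_pos x
  have h2 : Real.exp (2 * x) = Real.exp x * Real.exp x := by
    rw [two_mul, Real.exp_add]
  have h3 : (0:ℝ) < Real.exp x * Real.exp x + 1 := by positivity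
  rw [Real.tanh_eq_sinh_div_cosh, Real.sinh_eq, Real.cosh_eq, Real.exp_neg, h2]
  field_simp
  ring

lemma tanh_lt_one (x : ℝ) : Real.tanh x < 1 := by
  rw [tanh_eq_exp]
  have : (0:ℝ) < 2 / (Real.exp (2*x) + 1) := by positivity
  linarith

lemma tanh_strictMono : StrictMono Real.tanh := by
  intro x y hxy
  rw [tanh_eq_exp, tanh_eq_exp]
  have he : Real.exp (2*x) < Real.exp (2*y) := Real.exp_lt_exp.mpr (by linarith)
  have h1 : (0:ℝ) < Real.exp (2*x) + 1 := by positivity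
  have h2 : 2 / (Real.exp (2*y)+1) < 2 / (Real.exp (2*x)+1) :=
    div_lt_div_of_pos_left (by norm_num) h1 (by linarith)
  linarith

lemma tanh_artanh {s : ℝ} (h1 : -1 < s) (h2 : s < 1) : Real.tanh (artanh s) = s := by
  have hpos : 0 < (1 + s) / (1 - s) := div_pos (by linarith) (by linarith)
  have hne : (1:ℝ) - s ≠ 0 := by linarith
  rw [tanh_eq_exp, artanh, show 2 * (Real.log ((1+s)/(1-s)) / 2) = Real.log ((1+s)/(1-s)) by ring,
    Real.exp_log hpos, show (1+s)/(1-s) + 1 = 2/(1-s) by field_simp; ring]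
  rw [div_div_eq_mul_div, mul_comm, mul_div_assoc, div_self (by norm_num : (2:ℝ) ≠ 0), mul_one]
  linarith

lemma one_sub_tanh_sq (x : ℝ) : 1 - Real.tanh x ^ 2 = (1 / Real.cosh x) ^ 2 := by
  have h := Real.cosh_sq_sub_sinh_sq x
  have hc : Real.cosh x ≠ 0 := ne_of_gt (Real.cosh_pos x)
  rw [Real.tanh_eq_sinh_div_cosh]
  field_simp
  exact h

lemma hasDerivAt_tanh (x : ℝ) : HasDerivAt Real.tanh (1 / Real.cosh x ^ 2) x := by
  have h := (Real.hasDerivAt_sinh x).div (Real.hasDerivAt_cosh x) (ne_of_gt (Real.cosh_pos x))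
  have e : Real.tanh = fun y => Real.sinh y / Real.cosh y :=
    funext fun y => Real.tanh_eq_sinh_div_cosh y
  rw [e]
  rw [show Real.cosh x * Real.cosh x - Real.sinh x * Real.sinh x = 1 by
    nlinarith [Real.cosh_sq_sub_sinh_sq x]] at h
  exact h

/-- `φ_ω(0)²` and the `L^{p+1}` norm of `φ_ω`. -/
theorem stmt3 (γ p ω : ℝ) (hγ : 0 < γ) (hp : 1 < p) (hω : γ ^ 2 / 4 < ω) :
    phi γ p ω 0 ^ 2 =
      ((p + 1) * ω / 2 * (1 - (γ / (2 * Real.sqrt ω)) ^ 2)) ^ (2 / (p - 1)) ∧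
    (∫ x : ℝ, phi γ p ω x ^ (p + 1)) =
      4 / ((p - 1) * Real.sqrt ω) * ((p + 1) * ω / 2) ^ ((p + 1) / (p - 1)) *
        ∫ s in (γ / (2 * Real.sqrt ω))..1, (1 - s ^ 2) ^ (2 / (p - 1)) := by
  have hω0 : 0 < ω := lt_of_le_of_lt (by positivity) hω
  have hs : 0 < Real.sqrt ω := Real.sqrt_pos.mpr hω0
  set ξ : ℝ := γ / (2 * Real.sqrt ω) with hξdef
  set b : ℝ := artanh ξ with hbdef
  set c : ℝ := (p - 1) * Real.sqrt ω / 2 with hcdef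
  set A : ℝ := (p + 1) * ω / 2 with hAdef
  set q : ℝ := (p + 1) / (p - 1) with hqdef
  have hp1 : (0:ℝ) < p - 1 := by linarith
  have hc : 0 < c := by positivity
  have hA : 0 < A := by rw [hAdef]; positivity
  have hξ0 : 0 < ξ := by rw [hξdef]; positivity
  have hξ1 : ξ < 1 := by
    rw [hξdef, div_lt_one (by positivity)]
    have hsq : γ ^ 2 < (2 * Real.sqrt ω) ^ 2 := by
      rw [mul_pow, Real.sq_sqrt hω0.le]; nlinarith
    exact lt_of_pow_lt_pow_left₀ 2 (by positivity) hsq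
  have htb : Real.tanh b = ξ := tanh_artanh (by linarith) hξ1
  have hsq1 : ξ ^ 2 < 1 := by nlinarith
  constructor
  · -- value at 0
    have key : (1 / Real.cosh b) ^ 2 = 1 - ξ ^ 2 := by
      rw [← one_sub_tanh_sq b, htb]
    have h0 : phi γ p ω 0 = (A * (1 - ξ ^ 2)) ^ (1 / (p - 1)) := by
      unfold phi
      rw [abs_zero, mul_zero, zero_add, ← hξdef, ← hbdef, ← hAdef, key]
    have hAξ : (0:ℝ) ≤ A * (1 - ξ ^ 2) := by nlinarith
    rw [h0, ← Real.rpow_natCast ((A * (1 - ξ ^ 2)) ^ (1 / (p - 1))) 2,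
      ← Real.rpow_mul hAξ,
      show (1 / (p - 1) * ((2:ℕ):ℝ)) = 2 / (p - 1) by push_cast; ring]
  · -- the integral
    set T : ℝ → ℝ := fun x => Real.tanh (c * x + b) with hTdef
    set F : ℝ → ℝ := fun x => 1 / Real.cosh (c * x + b) ^ 2 * c with hFdef
    have hT' : ∀ x ∈ Ioi (0:ℝ), HasDerivWithinAt T (F x) (Ioi 0) x := by
      intro x _
      have hlin : HasDerivAt (fun y : ℝ => c * y + b) c x := by
        simpa using ((hasDerivAt_id x).const_mul c).add_const b
      exact ((hasDerivAt_tanh (c * x + b)).comp x hlin).hasDerivWithinAt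
    have hTmono : StrictMono T := fun a a' h => tanh_strictMono (by simp [hTdef]; nlinarith)
    have hinj : InjOn T (Ioi 0) := hTmono.injective.injOn
    have himg : T '' Ioi 0 = Ioo ξ 1 := by
      ext s
      constructor
      · rintro ⟨x, hx, rfl⟩
        refine ⟨?_, tanh_lt_one _⟩
        rw [← htb]
        have : b = c * 0 + b := by ring
        rw [this]
        exact tanh_strictMono (by simp at hx ⊢; nlinarith)
      · rintro ⟨hs1, hs2⟩
        have hsm1 : -1 < s := by linarith
        have hbs : b < artanh s := by
          have h := tanh_strictMono.lt_iff_lt (a := b) (b := artanh s)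
          rw [htb, tanh_artanh hsm1 hs2] at h
          exact h.mp hs1
        refine ⟨(artanh s - b) / c, ?_, ?_⟩
        · exact div_pos (by linarith) hc
        · show Real.tanh (c * ((artanh s - b) / c) + b) = s
          rw [mul_div_cancel₀ _ (ne_of_gt hc)]
          rw [show artanh s - b + b = artanh s by ring]
          exact tanh_artanh hsm1 hs2
    -- pointwise simplification of the substituted integrand
    have hintegrand : ∀ x : ℝ,
        |F x| • ((1 - T x ^ 2) ^ (2 / (p - 1)) : ℝ)
          = c * (1 / Real.cosh (c * x + b)) ^ (2 * q) := by
      intro x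
      have hch : (0:ℝ) < 1 / Real.cosh (c * x + b) := by positivity
      have hF : F x = (1 / Real.cosh (c * x + b)) ^ 2 * c := by
        rw [hFdef]; simp [div_pow]
      rw [smul_eq_mul, hF, abs_of_pos (by positivity), hTdef]
      show (1 / Real.cosh (c * x + b)) ^ 2 * c *
          (1 - Real.tanh (c * x + b) ^ 2) ^ (2 / (p - 1)) = _
      rw [one_sub_tanh_sq]
      rw [← Real.rpow_natCast (1 / Real.cosh (c * x + b)) 2,
        ← Real.rpow_mul hch.le]
      rw [mul_comm ((1 / Real.cosh (c * x + b)) ^ ((2:ℕ):ℝ)) c, mul_assoc,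
        ← Real.rpow_add hch]
      rw [show ((2:ℕ):ℝ) + ((2:ℕ):ℝ) * (2 / (p - 1)) = 2 * q by
        rw [hqdef]; push_cast; field_simp; ring]
    have hphi : ∀ x : ℝ, phi γ p ω x ^ (p + 1)
        = A ^ q * (1 / Real.cosh (c * |x| + b)) ^ (2 * q) := by
      intro x
      have hch : (0:ℝ) < 1 / Real.cosh (c * |x| + b) := by positivity
      have hb0 : (0:ℝ) ≤ A * (1 / Real.cosh (c * |x| + b)) ^ 2 := by positivity
      unfold phi
      rw [← Real.rpow_mul hb0, show 1 / (p - 1) * (p + 1) = q by rw [hqdef]; ring,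
        Real.mul_rpow hA.le (by positivity),
        ← Real.rpow_natCast (1 / Real.cosh (c * |x| + b)) 2,
        ← Real.rpow_mul hch.le,
        show ((2:ℕ):ℝ) * q = 2 * q by push_cast; ring]
    have hcomp : (∫ x : ℝ, phi γ p ω x ^ (p + 1))
        = 2 * ∫ x in Ioi (0:ℝ), A ^ q * (1 / Real.cosh (c * x + b)) ^ (2 * q) := by
      simp_rw [hphi]
      exact integral_comp_abs
        (f := fun y => A ^ q * (1 / Real.cosh (c * y + b)) ^ (2 * q))
    have hIoi : (∫ x in Ioi (0:ℝ), A ^ q * (1 / Real.cosh (c * x + b)) ^ (2 * q))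
        = A ^ q * ∫ x in Ioi (0:ℝ), (1 / Real.cosh (c * x + b)) ^ (2 * q) :=
      MeasureTheory.integral_const_mul _ _
    have hsub : (∫ s in ξ..1, (1 - s ^ 2) ^ (2 / (p - 1)))
        = c * ∫ x in Ioi (0:ℝ), (1 / Real.cosh (c * x + b)) ^ (2 * q) := by
      rw [intervalIntegral.integral_of_le hξ1.le,
        MeasureTheory.integral_Ioc_eq_integral_Ioo, ← himg,
        integral_image_eq_integral_abs_deriv_smul measurableSet_Ioi hT' hinj]
      simp_rw [hintegrand]
      exact MeasureTheory.integral_const_mul _ _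
    rw [hcomp, hIoi, hsub]
    have hne : (p - 1) * Real.sqrt ω ≠ 0 := by positivity
    rw [hcdef]
    field_simp
    ring
end
end

section
/- Let γ > 0, p > 5 and ω > γ²/4. Assume E(φ_ω) > 0 and S_ω(φ_ω) = d(ω). Let T ∈ (0,∞], and let u : [0,T) → H¹(ℝ) be a map such that for all t ∈ [0,T): E(u(t)) = E(u(0)) and ‖u(t)‖_{L²} = ‖u(0)‖_{L²}, and such that t ↦ K_ω(u(t)) and t ↦ P(u(t)) are continuous on [0,T). If u(0) ∈ 𝓑_ω, then u(t) ∈ 𝓑_ω for all t ∈ [0,T). -/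
open MeasureTheory Set
open scoped ENNReal

noncomputable section

/-! ### Auxiliary lemmas -/

lemma deriv_scale {l : ℝ} (hl : 0 < l) (v : ℝ → ℂ) (x : ℝ) :
    deriv (scale l v) x = ((Real.sqrt l * l : ℝ) : ℂ) * deriv v (l * x) := by
  have hs : Real.sqrt l ≠ 0 := ne_of_gt (Real.sqrt_pos.mpr hl)
  by_cases h : DifferentiableAt ℝ v (l * x)
  · have hin : HasDerivAt (fun y : ℝ => l * y) l x := by
      simpa using (hasDerivAt_id x).const_mul l
    have hcomp : HasDerivAt (fun y : ℝ => v (l * y)) (l • deriv v (l * x)) x :=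
      (h.hasDerivAt.scomp x hin)
    have : HasDerivAt (scale l v) ((Real.sqrt l : ℂ) * (l • deriv v (l * x))) x :=
      hcomp.const_mul _
    rw [this.deriv]
    push_cast
    simp [smul_eq_mul]
    ring
  · have h2 : ¬ DifferentiableAt ℝ (scale l v) x := by
      intro hd
      apply h
      have hveq : v = fun y => ((Real.sqrt l : ℂ))⁻¹ * scale l v (l⁻¹ * y) := by
        funext y
        simp only [scale]
        rw [mul_inv_cancel_left₀ (ne_of_gt hl)]
        rw [← mul_assoc, inv_mul_cancel₀ (by exact_mod_cast hs), one_mul]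
      rw [hveq]
      have hin : DifferentiableAt ℝ (fun y : ℝ => l⁻¹ * y) (l * x) := by
        fun_prop
      have heq : (fun y : ℝ => l⁻¹ * y) (l * x) = x := by
        field_simp
      exact ((heq ▸ hd).comp (l * x) hin).const_mul _
    rw [deriv_zero_of_not_differentiableAt h, deriv_zero_of_not_differentiableAt h2, mul_zero]

lemma l2Sq_scale {l : ℝ} (hl : 0 < l) (v : ℝ → ℂ) : l2Sq (scale l v) = l2Sq v := by
  have h1 : ∀ x : ℝ, ‖scale l v x‖ ^ 2 = l * ‖v (l * x)‖ ^ 2 := by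
    intro x
    simp only [scale, norm_mul, Complex.norm_real, Real.norm_eq_abs,
      abs_of_nonneg (Real.sqrt_nonneg l), mul_pow, Real.sq_sqrt hl.le]
  unfold l2Sq
  simp_rw [h1]
  rw [MeasureTheory.integral_const_mul, MeasureTheory.Measure.integral_comp_mul_left
    (fun y => ‖v y‖ ^ 2) l, smul_eq_mul, abs_of_nonneg (inv_nonneg.mpr hl.le)]
  field_simp

lemma gradSq_scale {l : ℝ} (hl : 0 < l) (v : ℝ → ℂ) : gradSq (scale l v) = l ^ 2 * gradSq v := by
  have h1 : ∀ x : ℝ, ‖deriv (scale l v) x‖ ^ 2 = l ^ 3 * ‖deriv v (l * x)‖ ^ 2 := by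
    intro x
    rw [deriv_scale hl v x]
    simp only [norm_mul, Complex.norm_real, Real.norm_eq_abs,
      abs_of_nonneg (Real.sqrt_nonneg l), abs_of_nonneg hl.le, mul_pow, Real.sq_sqrt hl.le]
    ring
  unfold gradSq
  simp_rw [h1]
  rw [MeasureTheory.integral_const_mul, MeasureTheory.Measure.integral_comp_mul_left
    (fun y => ‖deriv v y‖ ^ 2) l, smul_eq_mul, abs_of_nonneg (inv_nonneg.mpr hl.le)]
  field_simp

lemma lpPow_scale {l : ℝ} (hl : 0 < l) (p : ℝ) (v : ℝ → ℂ) :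
    lpPow p (scale l v) = l ^ ((p - 1) / 2) * lpPow p v := by
  have h1 : ∀ x : ℝ, ‖scale l v x‖ ^ (p + 1) = l ^ ((p + 1) / 2) * ‖v (l * x)‖ ^ (p + 1) := by
    intro x
    simp only [scale, norm_mul, Complex.norm_real, Real.norm_eq_abs,
      abs_of_nonneg (Real.sqrt_nonneg l)]
    rw [Real.mul_rpow (Real.sqrt_nonneg l) (norm_nonneg _)]
    congr 1
    rw [Real.sqrt_eq_rpow, ← Real.rpow_mul hl.le]
    congr 1
    ring
  unfold lpPow
  simp_rw [h1]
  rw [MeasureTheory.integral_const_mul, MeasureTheory.Measure.integral_comp_mul_left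
    (fun y => ‖v y‖ ^ (p + 1)) l, smul_eq_mul, abs_of_nonneg (inv_nonneg.mpr hl.le)]
  rw [← mul_assoc]
  congr 1
  rw [← Real.rpow_neg_one l, ← Real.rpow_add hl]
  congr 1
  ring

lemma scale_zero_norm {l : ℝ} (hl : 0 < l) (v : ℝ → ℂ) :
    ‖scale l v 0‖ ^ 2 = l * ‖v 0‖ ^ 2 := by
  simp only [scale, mul_zero, norm_mul, Complex.norm_real, Real.norm_eq_abs,
    abs_of_nonneg (Real.sqrt_nonneg l), mul_pow, Real.sq_sqrt hl.le]

lemma quasiMP {l : ℝ} (hl : 0 < l) :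
    MeasureTheory.Measure.QuasiMeasurePreserving (fun x : ℝ => l * x) volume volume := by
  refine ⟨(measurable_const_mul l), ?_⟩
  rw [Real.map_volume_mul_left (ne_of_gt hl)]
  exact Measure.AbsolutelyContinuous.smul_left Measure.AbsolutelyContinuous.rfl _

lemma memLp_comp_mul_left {l : ℝ} (hl : 0 < l) {f : ℝ → ℂ} (hf : MemLp f 2 volume) :
    MemLp (fun x => f (l * x)) 2 volume := by
  have hm : AEStronglyMeasurable (fun x => f (l * x)) volume :=
    hf.aestronglyMeasurable.comp_quasiMeasurePreserving (quasiMP hl)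
  rw [memLp_two_iff_integrable_sq_norm hm]
  have hint : Integrable (fun y => ‖f y‖ ^ 2) volume :=
    (memLp_two_iff_integrable_sq_norm hf.aestronglyMeasurable).mp hf
  exact (MeasureTheory.integrable_comp_mul_left_iff (fun y => ‖f y‖ ^ 2)
    (ne_of_gt hl)).mpr hint

lemma memH1_scale {l : ℝ} (hl : 0 < l) {v : ℝ → ℂ} (hv : MemH1 v) : MemH1 (scale l v) := by
  obtain ⟨hc, hl2, hd2, hftc⟩ := hv
  have hderiv : deriv (scale l v) = fun x => ((Real.sqrt l * l : ℝ) : ℂ) * deriv v (l * x) :=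
    funext (deriv_scale hl v)
  refine ⟨?_, ?_, ?_, ?_⟩
  · exact continuous_const.mul (hc.comp (continuous_const.mul continuous_id))
  · exact (memLp_comp_mul_left hl hl2).const_mul _
  · rw [hderiv]
    exact (memLp_comp_mul_left hl hd2).const_mul _
  · intro x
    rw [hderiv]
    rw [intervalIntegral.integral_const_mul]
    rw [intervalIntegral.integral_comp_mul_left (fun t => deriv v t) (ne_of_gt hl)]
    simp only [mul_zero]
    have h0 := hftc (l * x)
    simp only [scale, mul_zero]
    rw [h0]
    rw [Complex.real_smul]
    have hlC : (l:ℂ) ≠ 0 := by exact_mod_cast ne_of_gt hl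
    push_cast
    field_simp

lemma scale_ne_zero {l : ℝ} (hl : 0 < l) {v : ℝ → ℂ} (hv : v ≠ 0) : scale l v ≠ 0 := by
  intro h
  apply hv
  funext y
  have h2 := congrFun h (l⁻¹ * y)
  simp only [scale, Pi.zero_apply] at h2 ⊢
  rw [mul_inv_cancel_left₀ (ne_of_gt hl)] at h2
  have hs : (Real.sqrt l : ℂ) ≠ 0 := by
    exact_mod_cast ne_of_gt (Real.sqrt_pos.mpr hl)
  exact (mul_eq_zero.mp h2).resolve_left hs

lemma l2Sq_nonneg (v : ℝ → ℂ) : 0 ≤ l2Sq v := integral_nonneg (fun x => by positivity)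
lemma gradSq_nonneg (v : ℝ → ℂ) : 0 ≤ gradSq v := integral_nonneg (fun x => by positivity)
lemma lpPow_nonneg (p : ℝ) (v : ℝ → ℂ) : 0 ≤ lpPow p v :=
  integral_nonneg (fun x => Real.rpow_nonneg (norm_nonneg _) _)

lemma l2Sq_pos {v : ℝ → ℂ} (hv : MemH1 v) (hne : v ≠ 0) : 0 < l2Sq v := by
  rcases lt_or_eq_of_le (l2Sq_nonneg v) with h | h
  · exact h
  exfalso
  apply hne
  have hint : Integrable (fun x => ‖v x‖ ^ 2) volume :=
    (memLp_two_iff_integrable_sq_norm hv.1.aestronglyMeasurable).mp hv.2.1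
  have hz : (fun x => ‖v x‖ ^ 2) =ᵐ[volume] 0 :=
    (integral_eq_zero_iff_of_nonneg (fun x => by positivity) hint).mp h.symm
  have hcont : Continuous (fun x => ‖v x‖ ^ 2) := (hv.1.norm.pow 2)
  have heq := (Continuous.ae_eq_iff_eq volume hcont continuous_zero).mp hz
  funext x
  have hx := congrFun heq x
  simp only [Pi.zero_apply] at hx ⊢
  have hn : ‖v x‖ = 0 := by nlinarith [norm_nonneg (v x)]
  exact norm_eq_zero.mp hn

lemma En_zero {γ p : ℝ} (hp : 1 < p) : En γ p (0 : ℝ → ℂ) = 0 := by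
  have hd : deriv (0 : ℝ → ℂ) = fun _ => 0 := by
    funext x
    exact deriv_const x 0
  unfold En gradSq lpPow
  rw [hd]
  simp [Real.zero_rpow (by linarith : p + 1 ≠ 0)]

/-- Core contradiction in the case `P(v) = 0`, `K(v) < 0`. -/
lemma caseB_absurd {γ p ω : ℝ} (hγ : 0 < γ) (hp : 5 < p) (hω : 0 < ω)
    {v : ℝ → ℂ} (hv : MemH1 v) (hne : v ≠ 0) (hK : Kfun γ p ω v < 0)
    (hPz : Pfun γ p v = 0) (hE : 0 < En γ p v) (hS : Sfun γ p ω v < dInf γ p ω)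
    (hge : ∀ w : ℝ → ℂ, MemH1 w → w ≠ 0 → Kfun γ p ω w = 0 → dInf γ p ω ≤ Sfun γ p ω w) :
    False := by
  have hp1 : 1 < p := by linarith
  have hp1' : p + 1 ≠ 0 := by linarith
  have hq2 : (2:ℝ) < (p-1)/2 := by linarith
  unfold Kfun at hK
  unfold Pfun at hPz
  unfold En at hE
  set G := gradSq v with hGdef
  set L := l2Sq v with hLdef
  set B := ‖v 0‖ ^ 2 with hBdef
  set N := lpPow p v with hNdef
  have hG : 0 ≤ G := gradSq_nonneg v
  have hB : 0 ≤ B := by positivity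
  have hN : 0 ≤ N := lpPow_nonneg p v
  have hL : 0 < L := l2Sq_pos hv hne
  set q : ℝ := (p-1)/2 with hqdef
  set k : ℝ → ℝ := fun l => l^2*G + ω*L - l*(γ*B) - l ^ q * N with hkdef
  have hkcont : Continuous k := by
    have h1 : Continuous fun l:ℝ => l ^ q := Real.continuous_rpow_const (by linarith)
    exact (((continuous_pow 2).mul continuous_const).add continuous_const).sub
      (continuous_id.mul continuous_const) |>.sub (h1.mul continuous_const)
  have hk0 : k 0 = ω * L := by
    simp only [hkdef]
    rw [Real.zero_rpow (by linarith : q ≠ 0)]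
    ring
  have hk1 : k 1 = G + ω*L - γ*B - N := by
    simp only [hkdef]
    rw [Real.one_rpow]
    ring
  have hivt := intermediate_value_Icc' (by norm_num : (0:ℝ) ≤ 1) hkcont.continuousOn
  have h0mem : (0:ℝ) ∈ Icc (k 1) (k 0) := by
    constructor
    · rw [hk1]; linarith
    · rw [hk0]; positivity
  obtain ⟨l0, hl0mem, hkl0⟩ := hivt h0mem
  have hkl0' : l0^2*G + ω*L - l0*(γ*B) - l0 ^ q * N = 0 := by
    rw [← hkl0]
  have hl0pos : 0 < l0 := by
    rcases lt_or_eq_of_le hl0mem.1 with h | h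
    · exact h
    · exfalso
      rw [← h] at hkl0
      rw [hk0] at hkl0
      nlinarith
  have hl0le : l0 ≤ 1 := hl0mem.2
  have hwH1 : MemH1 (scale l0 v) := memH1_scale hl0pos hv
  have hwne : scale l0 v ≠ 0 := scale_ne_zero hl0pos hne
  have hKw : Kfun γ p ω (scale l0 v) = 0 := by
    unfold Kfun
    rw [gradSq_scale hl0pos, l2Sq_scale hl0pos, lpPow_scale hl0pos p,
      scale_zero_norm hl0pos, ← hGdef, ← hLdef, ← hBdef, ← hNdef, ← hqdef]
    linear_combination hkl0'
  have hdle : dInf γ p ω ≤ Sfun γ p ω (scale l0 v) := hge _ hwH1 hwne hKw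
  -- now show Sfun w ≤ Sfun v
  set X : ℝ := l0 ^ q with hXdef
  have hb1 : 1 + q * (l0 - 1) ≤ X := by
    have hber := one_add_mul_self_le_rpow_one_add (s := l0 - 1) (by linarith) (p := q) (by linarith)
    have he : (1:ℝ) + (l0 - 1) = l0 := by ring
    rwa [he] at hber
  have hb2 : l0 * (1 + (q-1) * (l0 - 1)) ≤ X := by
    have hber := one_add_mul_self_le_rpow_one_add (s := l0 - 1) (by linarith)
      (p := q - 1) (by linarith)
    have he : (1:ℝ) + (l0 - 1) = l0 := by ring
    rw [he] at hber
    have hsplit : X = l0 * l0 ^ (q - 1) := by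
      rw [hXdef, show q = 1 + (q - 1) by ring, Real.rpow_add hl0pos, Real.rpow_one]
      ring_nf
    rw [hsplit]
    exact mul_le_mul_of_nonneg_left hber hl0pos.le
  have hPz' : γ/2 * B = G - q * (N/(p+1)) := by
    rw [hqdef]
    field_simp at hPz ⊢
    linarith
  have hmuN : 0 ≤ N/(p+1) := by positivity
  have hGlt : G < 2 * (q - 1) * (N/(p+1)) := by
    have hE' : 0 < G/2 - (G - q * (N/(p+1))) - N/(p+1) := by
      rw [← hPz']; linarith
    linarith
  have hkey : (q-1)*(1-l0)^2 ≤ q*(1-l0) - (1-X) := by linarith [hb2]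
  have t1 : (N/(p+1)) * ((q-1)*(1-l0)^2) ≤ (N/(p+1)) * (q*(1-l0) - (1-X)) :=
    mul_le_mul_of_nonneg_left hkey hmuN
  have t2 : (G/2) * (1-l0)^2 ≤ (N/(p+1)) * ((q-1)*(1-l0)^2) := by
    nlinarith [hGlt, sq_nonneg (1 - l0)]
  have e1 : γ/2 * (l0 * B) = l0 * (G - q * (N/(p+1))) := by
    rw [show γ/2 * (l0 * B) = l0 * (γ/2 * B) by ring, hPz']
  have hSw : Sfun γ p ω (scale l0 v) ≤ Sfun γ p ω v := by
    unfold Sfun En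
    rw [gradSq_scale hl0pos, l2Sq_scale hl0pos, lpPow_scale hl0pos p,
      scale_zero_norm hl0pos, ← hGdef, ← hLdef, ← hBdef, ← hNdef, ← hqdef, ← hXdef]
    clear_value X q G L B N
    have c1 : (G / 2 - γ / 2 * B - N / (p + 1) + ω / 2 * L) -
        (l0 ^ 2 * G / 2 - γ / 2 * (l0 * B) - X * N / (p + 1) + ω / 2 * L)
        = N / (p + 1) * (q * (1 - l0) - (1 - X)) - G / 2 * (1 - l0) ^ 2 := by
      linear_combination e1 - hPz'
    linarith [t1, t2, c1]
  linarith

/-- the set `𝓑_ω` is invariant under the flow. -/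
theorem stmt10 (γ p ω : ℝ) (hγ : 0 < γ) (hp : 5 < p) (hω : γ ^ 2 / 4 < ω)
    (hEφ : 0 < En γ p (phiC γ p ω)) (hd : Sfun γ p ω (phiC γ p ω) = dInf γ p ω)
    (T : ℝ≥0∞) (hT : 0 < T) (u : ℝ → ℝ → ℂ)
    (hu : ∀ t : ℝ, 0 ≤ t → ENNReal.ofReal t < T → MemH1 (u t))
    (hcons : ∀ t : ℝ, 0 ≤ t → ENNReal.ofReal t < T →
      En γ p (u t) = En γ p (u 0) ∧ l2Sq (u t) = l2Sq (u 0))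
    (hKcont : ContinuousOn (fun t => Kfun γ p ω (u t))
      {t : ℝ | 0 ≤ t ∧ ENNReal.ofReal t < T})
    (hPcont : ContinuousOn (fun t => Pfun γ p (u t))
      {t : ℝ | 0 ≤ t ∧ ENNReal.ofReal t < T})
    (h0 : inB γ p ω (u 0)) :
    ∀ t : ℝ, 0 ≤ t → ENNReal.ofReal t < T → inB γ p ω (u t) := by
  have hp1 : 1 < p := by linarith
  have hω0 : 0 < ω := by nlinarith
  obtain ⟨h0H1, h0E, h0Eφ, h0l2, h0P, h0K⟩ := h0
  have hge : ∀ w : ℝ → ℂ, MemH1 w → w ≠ 0 → Kfun γ p ω w = 0 → dInf γ p ω ≤ Sfun γ p ω w := by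
    intro w hw hwne hKw
    by_cases hb : BddBelow {s : ℝ | ∃ v : ℝ → ℂ,
        MemH1 v ∧ v ≠ 0 ∧ Kfun γ p ω v = 0 ∧ s = Sfun γ p ω v}
    · exact csInf_le hb ⟨w, hw, hwne, hKw, rfl⟩
    · exfalso
      have h0' : dInf γ p ω = 0 := Real.sInf_of_not_bddBelow hb
      have hl2 := l2Sq_nonneg (phiC γ p ω)
      have hmul : 0 ≤ ω / 2 * l2Sq (phiC γ p ω) := mul_nonneg (by linarith) hl2
      have hpos : 0 < Sfun γ p ω (phiC γ p ω) := by
        unfold Sfun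
        linarith
      rw [hd, h0'] at hpos
      exact lt_irrefl 0 hpos
  have key : ∀ s : ℝ, 0 ≤ s → ENNReal.ofReal s < T →
      Kfun γ p ω (u s) < 0 ∧ Pfun γ p (u s) < 0 := by
    intro s hs hsT
    by_contra hcon
    have hsub : Icc (0:ℝ) s ⊆ {t : ℝ | 0 ≤ t ∧ ENNReal.ofReal t < T} := by
      intro r hr
      exact ⟨hr.1, lt_of_le_of_lt (ENNReal.ofReal_le_ofReal hr.2) hsT⟩
    have hFc : ContinuousOn (fun t => max (Kfun γ p ω (u t)) (Pfun γ p (u t))) (Icc 0 s) := by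
      have := (hKcont.mono hsub).sup (hPcont.mono hsub)
      simpa using this
    have hF0 : max (Kfun γ p ω (u 0)) (Pfun γ p (u 0)) < 0 := max_lt h0K h0P
    have hFs : 0 ≤ max (Kfun γ p ω (u s)) (Pfun γ p (u s)) := by
      rcases not_and_or.mp hcon with h | h
      · exact le_max_of_le_left (not_lt.mp h)
      · exact le_max_of_le_right (not_lt.mp h)
    obtain ⟨t0, ht0mem, hFt0⟩ := intermediate_value_Icc hs hFc ⟨hF0.le, hFs⟩
    have ht0I : 0 ≤ t0 ∧ ENNReal.ofReal t0 < T := hsub ht0mem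
    obtain ⟨hEc, hLc⟩ := hcons t0 ht0I.1 ht0I.2
    have hH1 : MemH1 (u t0) := hu t0 ht0I.1 ht0I.2
    have hEpos : 0 < En γ p (u t0) := by rw [hEc]; exact h0E
    have hne : u t0 ≠ 0 := by
      intro h
      rw [h, En_zero hp1] at hEpos
      exact lt_irrefl 0 hEpos
    have hSlt : Sfun γ p ω (u t0) < dInf γ p ω := by
      rw [← hd]
      unfold Sfun
      rw [hEc, hLc, h0l2]
      linarith
    have hFt0' : max (Kfun γ p ω (u t0)) (Pfun γ p (u t0)) = 0 := hFt0
    have hK0 : Kfun γ p ω (u t0) ≤ 0 := le_of_le_of_eq (le_max_left _ _) hFt0'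
    have hP0 : Pfun γ p (u t0) ≤ 0 := le_of_le_of_eq (le_max_right _ _) hFt0'
    rcases eq_or_lt_of_le hK0 with hKz | hKlt
    · exact absurd (hge (u t0) hH1 hne hKz) (not_le.mpr hSlt)
    · have hPz : Pfun γ p (u t0) = 0 := by
        rcases lt_or_eq_of_le hP0 with h | h
        · exfalso
          have hlt := max_lt hKlt h
          rw [hFt0'] at hlt
          exact lt_irrefl 0 hlt
        · exact h
      exact caseB_absurd hγ hp hω0 hH1 hne hKlt hPz hEpos hSlt hge
  intro t ht htT
  obtain ⟨hKneg, hPneg⟩ := key t ht htT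
  obtain ⟨hEc, hLc⟩ := hcons t ht htT
  exact ⟨hu t ht htT, by rw [hEc]; exact h0E, by rw [hEc]; exact h0Eφ,
    by rw [hLc]; exact h0l2, hPneg, hKneg⟩
end
end
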